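/- Let (Ω, 𝒜, P) be a probability space, and for i = 1, 2, 3 let Σ_i ⊆ 𝒜 be the σ-algebra generated by a measurable map V_i : Ω → 𝒱_i into a measurable space 𝒱_i. Let Λ be the Lebesgue measure on [0,1], and suppose g : 𝒱₂ × [0,1] → 𝒱₃ is a measurable map satisfying (π_{𝒱₂} × g)_*((V₂)_*P ⊗ Λ) = (V₂ × V₃)_*P. Let G : 𝒱₁ × 𝒱₂ × [0,1] → 𝒱₁ × 𝒱₂ × 𝒱₃ denote the map G(v₁, v₂, λ) = (v₁, v₂, g(v₂, λ)). Then the following are equivalent: (i) Σ₁ and Σ₃ are conditionally independent given Σ₂ with respect to P; (ii) G_*((V₁ × V₂)_*P ⊗ Λ) = (V₁ × V₂ × V₃)_*P. -/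

import Mathlib

open Set Filter Topology MeasureTheory MeasurableSpace

section Aux

lemma doob_dynkin_bdd {Ω 𝒱 : Type*} [MeasurableSpace Ω] [MeasurableSpace 𝒱]
    (V : Ω → 𝒱) (β : Ω → ℝ)
    (hβ : Measurable[MeasurableSpace.comap V inferInstance] β)
    {C : ℝ} (hC0 : 0 ≤ C) (hC : ∀ ω, |β ω| ≤ C) :
    ∃ f : 𝒱 → ℝ, Measurable f ∧ (∀ v, |f v| ≤ C + 1) ∧ ∀ ω, β ω = f (V ω) := by
  classical
  have h : ∀ q : ℚ, ∃ B : Set 𝒱, MeasurableSet B ∧ V ⁻¹' B = β ⁻¹' (Iio (q : ℝ)) := by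
    intro q
    have := hβ measurableSet_Iio (t := Iio (q : ℝ))
    exact measurableSet_comap.mp this
  choose B hBm hBeq using h
  set u : ℚ → 𝒱 → ℝ := fun q v => if v ∈ B q then max (q : ℝ) (-C) else C + 1 with hu
  have humeas : ∀ q, Measurable (u q) := fun q =>
    Measurable.ite (hBm q) measurable_const measurable_const
  have hbdd : ∀ v, BddBelow (Set.range fun q => u q v) := by
    intro v
    refine ⟨-C, ?_⟩
    rintro x ⟨q, rfl⟩
    simp only [hu]
    split_ifs
    · exact le_max_right _ _
    · linarith
  refine ⟨fun v => ⨅ q : ℚ, u q v, Measurable.iInf humeas, ?_, ?_⟩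
  · intro v
    rw [abs_le]
    constructor
    · have : -C ≤ ⨅ q : ℚ, u q v := le_ciInf fun q => by
        simp only [hu]; split_ifs
        · exact le_max_right _ _
        · linarith
      linarith
    · refine le_trans (ciInf_le (hbdd v) 0) ?_
      simp only [hu]
      split_ifs
      · simp only [Rat.cast_zero, max_le_iff]
        constructor <;> linarith
      · exact le_refl _
  · intro ω
    have hmem : ∀ q : ℚ, V ω ∈ B q ↔ β ω < (q : ℝ) := by
      intro q
      constructor
      · intro hq
        have : ω ∈ V ⁻¹' B q := hq
        rw [hBeq q] at this; exact this
      · intro hq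
        have : ω ∈ β ⁻¹' (Iio (q:ℝ)) := hq
        rw [← hBeq q] at this; exact this
    have h1 : β ω ≤ ⨅ q : ℚ, u q (V ω) := by
      refine le_ciInf fun q => ?_
      simp only [hu]
      split_ifs with hq
      · exact le_trans (le_of_lt ((hmem q).mp hq)) (le_max_left _ _)
      · have := abs_le.mp (hC ω); linarith
    have h2 : (⨅ q : ℚ, u q (V ω)) ≤ β ω := by
      refine le_of_forall_pos_le_add fun ε hε => ?_
      obtain ⟨q, hq1, hq2⟩ := exists_rat_btwn (show β ω < β ω + ε by linarith)
      refine le_trans (ciInf_le (hbdd _) q) ?_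
      simp only [hu]
      rw [if_pos ((hmem q).mpr hq1)]
      rw [max_eq_left (le_trans (by have := abs_le.mp (hC ω); linarith : -C ≤ β ω) (le_of_lt hq1))]
      exact le_of_lt hq2
    exact le_antisymm h1 h2

lemma integrable_of_bdd' {α : Type*} [MeasurableSpace α] {μ : Measure α} [IsFiniteMeasure μ]
    {f : α → ℝ} (hf : AEStronglyMeasurable f μ) {C : ℝ} (h : ∀ x, |f x| ≤ C) :
    Integrable f μ :=
  Integrable.mono' (integrable_const C) hf
    (Filter.Eventually.of_forall (by simpa [Real.norm_eq_abs] using h))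

lemma measure_ext_prod3 {α β γ : Type*} [MeasurableSpace α] [MeasurableSpace β] [MeasurableSpace γ]
    (μ ν : Measure (α × β × γ)) [IsFiniteMeasure μ]
    (huniv : μ Set.univ = ν Set.univ)
    (h : ∀ A B C, MeasurableSet A → MeasurableSet B → MeasurableSet C →
      μ (A ×ˢ B ×ˢ C) = ν (A ×ˢ B ×ˢ C)) : μ = ν := by
  have hgen : (Prod.instMeasurableSpace : MeasurableSpace (α × β × γ)) =
      MeasurableSpace.generateFrom
        (Set.image2 (· ×ˢ ·) {s : Set α | MeasurableSet s}
          (Set.image2 (· ×ˢ ·) {s : Set β | MeasurableSet s} {t : Set γ | MeasurableSet t})) := by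
    refine (generateFrom_eq_prod generateFrom_measurableSet generateFrom_prod
      isCountablySpanning_measurableSet ?_).symm
    exact (isCountablySpanning_measurableSet).prod (isCountablySpanning_measurableSet)
  refine ext_of_generate_finite _ hgen
    (isPiSystem_measurableSet.prod (isPiSystem_measurableSet.prod isPiSystem_measurableSet))
    ?_ huniv
  rintro _ ⟨A, hA, _, ⟨B, hB, C, hC, rfl⟩, rfl⟩
  exact h A B C hA hB hC

lemma fub_kernel {W 𝒱₂ 𝒱₃ I : Type*} [MeasurableSpace W] [MeasurableSpace 𝒱₂]
    [MeasurableSpace 𝒱₃] [MeasurableSpace I]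
    (μ : Measure W) [IsProbabilityMeasure μ] (Λ : Measure I) [IsProbabilityMeasure Λ]
    (π : W → 𝒱₂) (hπ : Measurable π) (g : 𝒱₂ × I → 𝒱₃) (hg : Measurable g)
    (φ : W → ℝ) (hφ : Measurable φ) {Cφ : ℝ} (hCφ : ∀ w, |φ w| ≤ Cφ)
    (f₃ : 𝒱₃ → ℝ) (hf₃ : Measurable f₃) {C₃ : ℝ} (hC₃ : ∀ v, |f₃ v| ≤ C₃) :
    ∫ p, φ p.1 * f₃ (g (π p.1, p.2)) ∂(μ.prod Λ)
      = ∫ w, φ w * (∫ l, f₃ (g (π w, l)) ∂Λ) ∂μ := by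
  have hmeas : Measurable fun p : W × I => φ p.1 * f₃ (g (π p.1, p.2)) :=
    (hφ.comp measurable_fst).mul
      (hf₃.comp (hg.comp ((hπ.comp measurable_fst).prodMk measurable_snd)))
  have hint : Integrable (fun p : W × I => φ p.1 * f₃ (g (π p.1, p.2))) (μ.prod Λ) := by
    refine integrable_of_bdd' hmeas.aestronglyMeasurable (C := |Cφ| * |C₃|) fun p => ?_
    rw [abs_mul]
    exact mul_le_mul (le_trans (hCφ _) (le_abs_self _)) (le_trans (hC₃ _) (le_abs_self _))
      (abs_nonneg _) (abs_nonneg _)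
  rw [integral_prod _ hint]
  refine integral_congr_ae (Filter.Eventually.of_forall fun w => ?_)
  simp only []
  rw [integral_const_mul]

lemma pullout_condexp {Ω : Type*} [m0 : MeasurableSpace Ω]
    (P : Measure Ω) [IsFiniteMeasure P] {m : MeasurableSpace Ω} (hm : m ≤ m0)
    [SigmaFinite (P.trim hm)] (ψ β : Ω → ℝ)
    (hψ : StronglyMeasurable[m] ψ) (hβi : Integrable β P)
    (hprod : Integrable (fun ω => ψ ω * β ω) P) :
    ∫ ω, ψ ω * (P[β|m]) ω ∂P = ∫ ω, ψ ω * β ω ∂P := by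
  have h := condExp_mul_of_stronglyMeasurable_left (μ := P) (m := m) hψ hprod hβi
  have h2 : ∫ ω, (P[fun ω => ψ ω * β ω|m]) ω ∂P = ∫ ω, ψ ω * β ω ∂P :=
    integral_condExp hm
  rw [← h2]
  refine integral_congr_ae ?_
  filter_upwards [h] with ω hω
  exact hω.symm

lemma setIntegral_comp_indicator {Ω 𝒱 : Type*} [MeasurableSpace Ω] [MeasurableSpace 𝒱]
    (P : Measure Ω) (V : Ω → 𝒱) (hV : Measurable V) {B : Set 𝒱} (hB : MeasurableSet B)
    (F : Ω → ℝ) :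
    ∫ ω in V ⁻¹' B, F ω ∂P = ∫ ω, B.indicator (fun _ => (1:ℝ)) (V ω) * F ω ∂P := by
  rw [← integral_indicator (hV hB)]
  refine integral_congr_ae (Filter.Eventually.of_forall fun ω => ?_)
  by_cases h : V ω ∈ B
  · simp [Set.indicator_of_mem h, Set.indicator_of_mem (Set.mem_preimage.mpr h)]
  · simp [Set.indicator_of_notMem h,
      Set.indicator_of_notMem (fun hh => h (Set.mem_preimage.mp hh)) (f := F)]

lemma abs_indicator_one_le {𝒱 : Type*} (B : Set 𝒱) (v : 𝒱) :
    |B.indicator (fun _ => (1:ℝ)) v| ≤ 1 := by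
  by_cases h : v ∈ B
  · simp [Set.indicator_of_mem h]
  · simp [Set.indicator_of_notMem h]

lemma indicator_one_measurable {𝒱 : Type*} [MeasurableSpace 𝒱] {B : Set 𝒱}
    (hB : MeasurableSet B) : Measurable (B.indicator (fun _ => (1:ℝ))) :=
  measurable_const.indicator hB

lemma condexp_eq_of_forall {Ω 𝒱₂ : Type*} [m0 : MeasurableSpace Ω] [MeasurableSpace 𝒱₂]
    (P : Measure Ω) [IsProbabilityMeasure P] (V₂ : Ω → 𝒱₂) (hV₂ : Measurable V₂)
    [SigmaFinite (P.trim hV₂.comap_le)]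
    (X : Ω → ℝ) (hX : Integrable X P) (k : 𝒱₂ → ℝ) (hk : Measurable k)
    (hki : Integrable (fun ω => k (V₂ ω)) P)
    (heq : ∀ B : Set 𝒱₂, MeasurableSet B →
      ∫ ω in V₂ ⁻¹' B, k (V₂ ω) ∂P = ∫ ω in V₂ ⁻¹' B, X ω ∂P) :
    (fun ω => k (V₂ ω)) =ᵐ[P] P[X | MeasurableSpace.comap V₂ inferInstance] := by
  refine ae_eq_condExp_of_forall_setIntegral_eq hV₂.comap_le hX
    (fun s _ _ => hki.integrableOn) (fun s hs _ => ?_) ?_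
  · obtain ⟨B, hB, rfl⟩ := hs
    exact heq B hB
  · exact ((hk.comp (comap_measurable V₂)).stronglyMeasurable).aestronglyMeasurable

lemma abs_mul_le {a b A B : ℝ} (ha : |a| ≤ A) (hb : |b| ≤ B) : |a * b| ≤ A * B := by
  rw [abs_mul]
  exact mul_le_mul ha hb (abs_nonneg _) ((abs_nonneg a).trans ha)

end Aux

/-- `Σ₁` and `Σ₃` are conditionally independent given `Σ₂` with respect to `μ`:
`E[β₁β₃ | Σ₂] = E[β₁ | Σ₂]·E[β₃ | Σ₂]` a.s. for all bounded `Σ₁`- resp.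
`Σ₃`-measurable real functions `β₁`, `β₃`. -/
def CondIndepGiven {Ω : Type*} [MeasurableSpace Ω] (μ : Measure Ω)
    (m₁ m₂ m₃ : MeasurableSpace Ω) : Prop :=
  ∀ β₁ β₃ : Ω → ℝ, Measurable[m₁] β₁ → Measurable[m₃] β₃ →
    (∃ C : ℝ, ∀ ω, |β₁ ω| ≤ C) → (∃ C : ℝ, ∀ ω, |β₃ ω| ≤ C) →
    (μ[fun ω => β₁ ω * β₃ ω|m₂]) =ᵐ[μ] fun ω => (μ[β₁|m₂]) ω * (μ[β₃|m₂]) ω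

theorem stmt18 {Ω 𝒱₁ 𝒱₂ 𝒱₃ : Type*} [MeasurableSpace Ω]
    [MeasurableSpace 𝒱₁] [MeasurableSpace 𝒱₂] [MeasurableSpace 𝒱₃]
    (P : Measure Ω) [IsProbabilityMeasure P]
    (V₁ : Ω → 𝒱₁) (V₂ : Ω → 𝒱₂) (V₃ : Ω → 𝒱₃)
    (hV₁ : Measurable V₁) (hV₂ : Measurable V₂) (hV₃ : Measurable V₃)
    -- a measurable map g : 𝒱₂ × [0,1] → 𝒱₃ with (π_{𝒱₂} × g)_*((V₂)_*P ⊗ Λ) = (V₂ × V₃)_*P,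
    -- Λ being the Lebesgue measure on [0,1]
    (g : 𝒱₂ × (Set.Icc (0:ℝ) 1) → 𝒱₃) (hg : Measurable g)
    (hgrep : Measure.map (fun p : 𝒱₂ × (Set.Icc (0:ℝ) 1) => (p.1, g p))
        ((Measure.map V₂ P).prod volume) =
      Measure.map (fun ω => (V₂ ω, V₃ ω)) P) :
    -- (i) ↔ (ii), where G(v₁,v₂,λ) = (v₁,v₂,g(v₂,λ))
    CondIndepGiven P (MeasurableSpace.comap V₁ inferInstance)
        (MeasurableSpace.comap V₂ inferInstance)
        (MeasurableSpace.comap V₃ inferInstance) ↔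
      Measure.map (fun p : (𝒱₁ × 𝒱₂) × (Set.Icc (0:ℝ) 1) => (p.1.1, p.1.2, g (p.1.2, p.2)))
          ((Measure.map (fun ω => (V₁ ω, V₂ ω)) P).prod volume) =
        Measure.map (fun ω => (V₁ ω, V₂ ω, V₃ ω)) P := by
  classical
  have hm₂ : MeasurableSpace.comap V₂ inferInstance ≤ ‹MeasurableSpace Ω› := hV₂.comap_le
  haveI : IsFiniteMeasure (P.trim hV₂.comap_le) :=
    ⟨by rw [trim_measurableSet_eq hV₂.comap_le MeasurableSet.univ]; exact measure_lt_top _ _⟩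
  haveI : IsProbabilityMeasure (Measure.map V₂ P) := Measure.isProbabilityMeasure_map hV₂.aemeasurable
  haveI : IsProbabilityMeasure (Measure.map (fun ω => (V₁ ω, V₂ ω)) P) :=
    Measure.isProbabilityMeasure_map (hV₁.prodMk hV₂).aemeasurable
  have hG : Measurable (fun p : (𝒱₁ × 𝒱₂) × (Set.Icc (0:ℝ) 1) =>
      (p.1.1, p.1.2, g (p.1.2, p.2))) :=
    (measurable_fst.fst).prodMk ((measurable_fst.snd).prodMk
      (hg.comp ((measurable_fst.snd).prodMk measurable_snd)))
  have h123 : Measurable (fun ω => (V₁ ω, V₂ ω, V₃ ω)) := hV₁.prodMk (hV₂.prodMk hV₃)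
  set k : (𝒱₃ → ℝ) → 𝒱₂ → ℝ :=
    fun f₃ v₂ => ∫ l, f₃ (g (v₂, l)) ∂(volume : Measure (Set.Icc (0:ℝ) 1)) with hkdef
  have hkmeas : ∀ f₃ : 𝒱₃ → ℝ, Measurable f₃ → Measurable (k f₃) := by
    intro f₃ h3
    exact (StronglyMeasurable.integral_prod_right'
      (ν := (volume : Measure (Set.Icc (0:ℝ) 1)))
      ((h3.comp hg).stronglyMeasurable)).measurable
  have hkbdd : ∀ (f₃ : 𝒱₃ → ℝ) (C₃ : ℝ), (∀ v, |f₃ v| ≤ C₃) → ∀ v₂, |k f₃ v₂| ≤ |C₃| := by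
    intro f₃ C₃ h3 v₂
    have := norm_integral_le_of_norm_le_const
      (μ := (volume : Measure (Set.Icc (0:ℝ) 1))) (f := fun l => f₃ (g (v₂, l))) (C := |C₃|)
      (Filter.Eventually.of_forall fun l => by
        simpa [Real.norm_eq_abs] using (h3 _).trans (le_abs_self _))
    simpa [Real.norm_eq_abs, measure_univ] using this
  have key1 : ∀ (f₂ : 𝒱₂ → ℝ) (f₃ : 𝒱₃ → ℝ) (C₂ C₃ : ℝ), Measurable f₂ → (∀ v, |f₂ v| ≤ C₂) →
      Measurable f₃ → (∀ v, |f₃ v| ≤ C₃) →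
      ∫ ω, f₂ (V₂ ω) * f₃ (V₃ ω) ∂P = ∫ ω, f₂ (V₂ ω) * k f₃ (V₂ ω) ∂P := by
    intro f₂ f₃ C₂ C₃ h2 hb2 h3 hb3
    have hmeas23 : Measurable fun q : 𝒱₂ × 𝒱₃ => f₂ q.1 * f₃ q.2 :=
      (h2.comp measurable_fst).mul (h3.comp measurable_snd)
    have e2 := fub_kernel (Measure.map V₂ P) (volume : Measure (Set.Icc (0:ℝ) 1))
      (fun v => v) measurable_id g hg f₂ h2 hb2 f₃ h3 hb3
    calc ∫ ω, f₂ (V₂ ω) * f₃ (V₃ ω) ∂P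
        = ∫ q : 𝒱₂ × 𝒱₃, f₂ q.1 * f₃ q.2 ∂(Measure.map (fun ω => (V₂ ω, V₃ ω)) P) :=
          (integral_map (hV₂.prodMk hV₃).aemeasurable hmeas23.aestronglyMeasurable).symm
      _ = ∫ p : 𝒱₂ × (Set.Icc (0:ℝ) 1), f₂ p.1 * f₃ (g p)
            ∂((Measure.map V₂ P).prod volume) := by
          rw [← hgrep]
          exact integral_map (measurable_fst.prodMk hg).aemeasurable
            hmeas23.aestronglyMeasurable
      _ = ∫ w, f₂ w * k f₃ w ∂(Measure.map V₂ P) := by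
          refine Eq.trans ?_ e2
          exact integral_congr_ae (Filter.Eventually.of_forall fun p => by simp)
      _ = ∫ ω, f₂ (V₂ ω) * k f₃ (V₂ ω) ∂P :=
          integral_map hV₂.aemeasurable ((h2.mul (hkmeas f₃ h3)).aestronglyMeasurable)
  have hcond : ∀ (f₃ : 𝒱₃ → ℝ) (C₃ : ℝ), Measurable f₃ → (∀ v, |f₃ v| ≤ C₃) →
      (fun ω => k f₃ (V₂ ω)) =ᵐ[P]
        P[fun ω => f₃ (V₃ ω) | MeasurableSpace.comap V₂ inferInstance] := by
    intro f₃ C₃ h3 hb3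
    refine condexp_eq_of_forall P V₂ hV₂ _ ?_ (k f₃) (hkmeas f₃ h3) ?_ ?_
    · exact integrable_of_bdd' ((h3.comp hV₃).aestronglyMeasurable) (fun ω => hb3 _)
    · exact integrable_of_bdd' (((hkmeas f₃ h3).comp hV₂).aestronglyMeasurable)
        (fun ω => hkbdd f₃ C₃ hb3 _)
    · intro B hB
      rw [setIntegral_comp_indicator P V₂ hV₂ hB, setIntegral_comp_indicator P V₂ hV₂ hB]
      exact (key1 (B.indicator fun _ => 1) f₃ 1 C₃ (indicator_one_measurable hB)
        (abs_indicator_one_le B) h3 hb3).symm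
  have key3 : ∀ (φ : 𝒱₁ × 𝒱₂ → ℝ) (Cφ : ℝ) (f₃ : 𝒱₃ → ℝ) (C₃ : ℝ), Measurable φ →
      (∀ w, |φ w| ≤ Cφ) → Measurable f₃ → (∀ v, |f₃ v| ≤ C₃) →
      ∫ p : (𝒱₁ × 𝒱₂) × (Set.Icc (0:ℝ) 1), φ p.1 * f₃ (g (p.1.2, p.2))
          ∂((Measure.map (fun ω => (V₁ ω, V₂ ω)) P).prod volume)
        = ∫ ω, φ (V₁ ω, V₂ ω) * k f₃ (V₂ ω) ∂P := by
    intro φ Cφ f₃ C₃ hφ hbφ h3 hb3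
    have e2 := fub_kernel (Measure.map (fun ω => (V₁ ω, V₂ ω)) P)
      (volume : Measure (Set.Icc (0:ℝ) 1)) Prod.snd measurable_snd g hg φ hφ hbφ f₃ h3 hb3
    rw [e2]
    exact integral_map (hV₁.prodMk hV₂).aemeasurable
      ((hφ.mul ((hkmeas f₃ h3).comp measurable_snd)).aestronglyMeasurable)
  constructor
  · -- (i) → (ii)
    intro hCI
    have CIstep : ∀ (A : Set 𝒱₁) (B : Set 𝒱₂) (C : Set 𝒱₃), MeasurableSet A → MeasurableSet B →
        MeasurableSet C →
        ∫ ω, (A.indicator (fun _ => (1:ℝ)) (V₁ ω) * B.indicator (fun _ => (1:ℝ)) (V₂ ω)) *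
            C.indicator (fun _ => (1:ℝ)) (V₃ ω) ∂P
          = ∫ ω, (A.indicator (fun _ => (1:ℝ)) (V₁ ω) * B.indicator (fun _ => (1:ℝ)) (V₂ ω)) *
            k (C.indicator (fun _ => (1:ℝ))) (V₂ ω) ∂P := by
      intro A B C hA hB hC
      have hβ₁m : Measurable[MeasurableSpace.comap V₁ inferInstance]
          (fun ω => A.indicator (fun _ => (1:ℝ)) (V₁ ω)) :=
        (indicator_one_measurable hA).comp (comap_measurable V₁)
      have hβ₃m : Measurable[MeasurableSpace.comap V₃ inferInstance]
          (fun ω => C.indicator (fun _ => (1:ℝ)) (V₃ ω)) :=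
        (indicator_one_measurable hC).comp (comap_measurable V₃)
      have hce := hCI _ _ hβ₁m hβ₃m ⟨1, fun ω => abs_indicator_one_le _ _⟩
        ⟨1, fun ω => abs_indicator_one_le _ _⟩
      have hβ₁i : Integrable (fun ω => A.indicator (fun _ => (1:ℝ)) (V₁ ω)) P :=
        integrable_of_bdd' (((indicator_one_measurable hA).comp hV₁).aestronglyMeasurable)
          (fun ω => abs_indicator_one_le _ _)
      have hβ₁β₃i : Integrable (fun ω => A.indicator (fun _ => (1:ℝ)) (V₁ ω) *
          C.indicator (fun _ => (1:ℝ)) (V₃ ω)) P :=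
        integrable_of_bdd' ((((indicator_one_measurable hA).comp hV₁).mul
          ((indicator_one_measurable hC).comp hV₃)).aestronglyMeasurable)
          (fun ω => abs_mul_le (abs_indicator_one_le _ _) (abs_indicator_one_le _ _))
      have hs : MeasurableSet[MeasurableSpace.comap V₂ inferInstance] (V₂ ⁻¹' B) := ⟨B, hB, rfl⟩
      have hsm : MeasurableSet (V₂ ⁻¹' B) := hV₂ hB
      have hψ : StronglyMeasurable[MeasurableSpace.comap V₂ inferInstance]
          (fun ω => B.indicator (fun _ => (1:ℝ)) (V₂ ω) *
            k (C.indicator (fun _ => (1:ℝ))) (V₂ ω)) :=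
        (((indicator_one_measurable hB).comp (comap_measurable V₂)).mul
          ((hkmeas _ (indicator_one_measurable hC)).comp (comap_measurable V₂))).stronglyMeasurable
      have hψβ₁i : Integrable (fun ω => (B.indicator (fun _ => (1:ℝ)) (V₂ ω) *
          k (C.indicator (fun _ => (1:ℝ))) (V₂ ω)) * A.indicator (fun _ => (1:ℝ)) (V₁ ω)) P :=
        integrable_of_bdd' (((((indicator_one_measurable hB).comp hV₂).mul
          ((hkmeas _ (indicator_one_measurable hC)).comp hV₂)).mul
          ((indicator_one_measurable hA).comp hV₁)).aestronglyMeasurable)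
          (fun ω => abs_mul_le (abs_mul_le (abs_indicator_one_le _ _)
            (hkbdd _ 1 (abs_indicator_one_le _) _)) (abs_indicator_one_le _ _))
      have hc3 := hcond (C.indicator (fun _ => (1:ℝ))) 1 (indicator_one_measurable hC)
        (abs_indicator_one_le _)
      calc ∫ ω, (A.indicator (fun _ => (1:ℝ)) (V₁ ω) * B.indicator (fun _ => (1:ℝ)) (V₂ ω)) *
              C.indicator (fun _ => (1:ℝ)) (V₃ ω) ∂P
          = ∫ ω, B.indicator (fun _ => (1:ℝ)) (V₂ ω) * (A.indicator (fun _ => (1:ℝ)) (V₁ ω) *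
              C.indicator (fun _ => (1:ℝ)) (V₃ ω)) ∂P :=
            integral_congr_ae (Filter.Eventually.of_forall fun ω => by ring)
        _ = ∫ ω in V₂ ⁻¹' B, A.indicator (fun _ => (1:ℝ)) (V₁ ω) *
              C.indicator (fun _ => (1:ℝ)) (V₃ ω) ∂P :=
            (setIntegral_comp_indicator P V₂ hV₂ hB _).symm
        _ = ∫ ω in V₂ ⁻¹' B, (P[fun ω => A.indicator (fun _ => (1:ℝ)) (V₁ ω) *
              C.indicator (fun _ => (1:ℝ)) (V₃ ω) | MeasurableSpace.comap V₂ inferInstance]) ω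
              ∂P := (setIntegral_condExp hm₂ hβ₁β₃i hs).symm
        _ = ∫ ω in V₂ ⁻¹' B,
              (P[fun ω => A.indicator (fun _ => (1:ℝ)) (V₁ ω) |
                MeasurableSpace.comap V₂ inferInstance]) ω *
              k (C.indicator (fun _ => (1:ℝ))) (V₂ ω) ∂P := by
            refine setIntegral_congr_ae hsm ?_
            filter_upwards [hce, hc3] with ω h1 h2 _
            rw [h1, ← h2]
        _ = ∫ ω, B.indicator (fun _ => (1:ℝ)) (V₂ ω) *
              ((P[fun ω => A.indicator (fun _ => (1:ℝ)) (V₁ ω) |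
                MeasurableSpace.comap V₂ inferInstance]) ω *
               k (C.indicator (fun _ => (1:ℝ))) (V₂ ω)) ∂P :=
            setIntegral_comp_indicator P V₂ hV₂ hB _
        _ = ∫ ω, (B.indicator (fun _ => (1:ℝ)) (V₂ ω) *
              k (C.indicator (fun _ => (1:ℝ))) (V₂ ω)) *
              (P[fun ω => A.indicator (fun _ => (1:ℝ)) (V₁ ω) |
                MeasurableSpace.comap V₂ inferInstance]) ω ∂P :=
            integral_congr_ae (Filter.Eventually.of_forall fun ω => by ring)
        _ = ∫ ω, (B.indicator (fun _ => (1:ℝ)) (V₂ ω) *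
              k (C.indicator (fun _ => (1:ℝ))) (V₂ ω)) *
              A.indicator (fun _ => (1:ℝ)) (V₁ ω) ∂P :=
            pullout_condexp P hm₂ _ _ hψ hβ₁i hψβ₁i
        _ = ∫ ω, (A.indicator (fun _ => (1:ℝ)) (V₁ ω) * B.indicator (fun _ => (1:ℝ)) (V₂ ω)) *
              k (C.indicator (fun _ => (1:ℝ))) (V₂ ω) ∂P :=
            integral_congr_ae (Filter.Eventually.of_forall fun ω => by ring)
    haveI : IsProbabilityMeasure (Measure.map
        (fun p : (𝒱₁ × 𝒱₂) × (Set.Icc (0:ℝ) 1) => (p.1.1, p.1.2, g (p.1.2, p.2)))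
        ((Measure.map (fun ω => (V₁ ω, V₂ ω)) P).prod volume)) :=
      Measure.isProbabilityMeasure_map hG.aemeasurable
    haveI : IsProbabilityMeasure (Measure.map (fun ω => (V₁ ω, V₂ ω, V₃ ω)) P) :=
      Measure.isProbabilityMeasure_map h123.aemeasurable
    refine measure_ext_prod3 _ _ (by simp [measure_univ]) ?_
    intro A B C hA hB hC
    have hrect : MeasurableSet (A ×ˢ B ×ˢ C) := hA.prod (hB.prod hC)
    rw [Measure.map_apply hG hrect, Measure.map_apply h123 hrect]
    refine (ENNReal.toReal_eq_toReal_iff' (measure_ne_top _ _) (measure_ne_top _ _)).mp ?_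
    rw [← measureReal_def, ← measureReal_def]
    rw [← integral_indicator_one (hG hrect), ← integral_indicator_one (h123 hrect)]
    have eL : ∫ p, ((fun p : (𝒱₁ × 𝒱₂) × (Set.Icc (0:ℝ) 1) =>
          (p.1.1, p.1.2, g (p.1.2, p.2))) ⁻¹' (A ×ˢ B ×ˢ C)).indicator 1 p
          ∂((Measure.map (fun ω => (V₁ ω, V₂ ω)) P).prod volume)
        = ∫ p : (𝒱₁ × 𝒱₂) × (Set.Icc (0:ℝ) 1),
          (A.indicator (fun _ => (1:ℝ)) p.1.1 * B.indicator (fun _ => (1:ℝ)) p.1.2) *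
            C.indicator (fun _ => (1:ℝ)) (g (p.1.2, p.2))
          ∂((Measure.map (fun ω => (V₁ ω, V₂ ω)) P).prod volume) :=
      integral_congr_ae (Filter.Eventually.of_forall fun p => by
        by_cases h1 : p.1.1 ∈ A <;> by_cases h2 : p.1.2 ∈ B <;>
          by_cases h3 : g (p.1.2, p.2) ∈ C <;>
          simp [Set.indicator_apply, Set.mem_prod, h1, h2, h3])
    have eR : ∫ ω, ((fun ω => (V₁ ω, V₂ ω, V₃ ω)) ⁻¹' (A ×ˢ B ×ˢ C)).indicator 1 ω ∂P
        = ∫ ω, (A.indicator (fun _ => (1:ℝ)) (V₁ ω) * B.indicator (fun _ => (1:ℝ)) (V₂ ω)) *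
            C.indicator (fun _ => (1:ℝ)) (V₃ ω) ∂P :=
      integral_congr_ae (Filter.Eventually.of_forall fun ω => by
        by_cases h1 : V₁ ω ∈ A <;> by_cases h2 : V₂ ω ∈ B <;> by_cases h3 : V₃ ω ∈ C <;>
          simp [Set.indicator_apply, Set.mem_prod, h1, h2, h3])
    have hstep : ∫ p, ((fun p : (𝒱₁ × 𝒱₂) × (Set.Icc (0:ℝ) 1) =>
          (p.1.1, p.1.2, g (p.1.2, p.2))) ⁻¹' (A ×ˢ B ×ˢ C)).indicator 1 p
          ∂((Measure.map (fun ω => (V₁ ω, V₂ ω)) P).prod volume)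
        = ∫ ω, (A.indicator (fun _ => (1:ℝ)) (V₁ ω) * B.indicator (fun _ => (1:ℝ)) (V₂ ω)) *
            k (C.indicator (fun _ => (1:ℝ))) (V₂ ω) ∂P :=
      eL.trans (key3 (fun w => A.indicator (fun _ => (1:ℝ)) w.1 *
        B.indicator (fun _ => (1:ℝ)) w.2) 1 (C.indicator (fun _ => (1:ℝ))) 1
        (((indicator_one_measurable hA).comp measurable_fst).mul
          ((indicator_one_measurable hB).comp measurable_snd))
        (fun w => by
          simpa using abs_mul_le (abs_indicator_one_le _ _) (abs_indicator_one_le _ _))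
        (indicator_one_measurable hC) (abs_indicator_one_le _))
    exact hstep.trans ((CIstep A B C hA hB hC).symm.trans eR.symm)
  · -- (ii) → (i)
    intro hmeq
    intro β₁ β₃ hβ₁ hβ₃ hb₁ hb₃
    obtain ⟨C₁, hC₁⟩ := hb₁
    obtain ⟨C₃, hC₃⟩ := hb₃
    obtain ⟨f₁, hf₁m, hf₁b, hf₁e⟩ := doob_dynkin_bdd V₁ β₁ hβ₁ (abs_nonneg C₁)
      (fun ω => (hC₁ ω).trans (le_abs_self _))
    obtain ⟨f₃, hf₃m, hf₃b, hf₃e⟩ := doob_dynkin_bdd V₃ β₃ hβ₃ (abs_nonneg C₃)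
      (fun ω => (hC₃ ω).trans (le_abs_self _))
    have hβ₁eq : β₁ = fun ω => f₁ (V₁ ω) := funext hf₁e
    have hβ₃eq : β₃ = fun ω => f₃ (V₃ ω) := funext hf₃e
    subst hβ₁eq
    subst hβ₃eq
    have hkey : ∀ B : Set 𝒱₂, MeasurableSet B →
        ∫ ω, (f₁ (V₁ ω) * B.indicator (fun _ => (1:ℝ)) (V₂ ω)) * f₃ (V₃ ω) ∂P
          = ∫ ω, (f₁ (V₁ ω) * B.indicator (fun _ => (1:ℝ)) (V₂ ω)) * k f₃ (V₂ ω) ∂P := by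
      intro B hB
      have hmm : Measurable fun q : 𝒱₁ × 𝒱₂ × 𝒱₃ =>
          (f₁ q.1 * B.indicator (fun _ => (1:ℝ)) q.2.1) * f₃ q.2.2 :=
        ((hf₁m.comp measurable_fst).mul
          ((indicator_one_measurable hB).comp (measurable_snd.fst))).mul
          (hf₃m.comp (measurable_snd.snd))
      calc ∫ ω, (f₁ (V₁ ω) * B.indicator (fun _ => (1:ℝ)) (V₂ ω)) * f₃ (V₃ ω) ∂P
          = ∫ q : 𝒱₁ × 𝒱₂ × 𝒱₃, (f₁ q.1 * B.indicator (fun _ => (1:ℝ)) q.2.1) * f₃ q.2.2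
              ∂(Measure.map (fun ω => (V₁ ω, V₂ ω, V₃ ω)) P) :=
            (integral_map h123.aemeasurable hmm.aestronglyMeasurable).symm
        _ = ∫ p : (𝒱₁ × 𝒱₂) × (Set.Icc (0:ℝ) 1),
              (f₁ p.1.1 * B.indicator (fun _ => (1:ℝ)) p.1.2) * f₃ (g (p.1.2, p.2))
              ∂((Measure.map (fun ω => (V₁ ω, V₂ ω)) P).prod volume) := by
            rw [← hmeq]
            exact integral_map hG.aemeasurable hmm.aestronglyMeasurable
        _ = ∫ ω, (f₁ (V₁ ω) * B.indicator (fun _ => (1:ℝ)) (V₂ ω)) * k f₃ (V₂ ω) ∂P :=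
            key3 (fun w => f₁ w.1 * B.indicator (fun _ => (1:ℝ)) w.2) ((|C₁| + 1) * 1) f₃
              (|C₃| + 1)
              ((hf₁m.comp measurable_fst).mul
                ((indicator_one_measurable hB).comp measurable_snd))
              (fun w => abs_mul_le (hf₁b _) (abs_indicator_one_le _ _)) hf₃m hf₃b
    have hprodi : Integrable (fun ω => f₁ (V₁ ω) * f₃ (V₃ ω)) P :=
      integrable_of_bdd' (((hf₁m.comp hV₁).mul (hf₃m.comp hV₃)).aestronglyMeasurable)
        (fun ω => abs_mul_le (hf₁b _) (hf₃b _))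
    have hβ₁i : Integrable (fun ω => f₁ (V₁ ω)) P :=
      integrable_of_bdd' ((hf₁m.comp hV₁).aestronglyMeasurable) (fun ω => hf₁b _)
    have hYi : Integrable (fun ω => k f₃ (V₂ ω) *
        (P[fun ω => f₁ (V₁ ω) | MeasurableSpace.comap V₂ inferInstance]) ω) P :=
      Integrable.bdd_mul integrable_condExp
        (((hkmeas f₃ hf₃m).comp hV₂).aestronglyMeasurable)
        (c := |(|C₃| + 1)|) (Filter.Eventually.of_forall fun ω => by
          simpa [Real.norm_eq_abs] using hkbdd f₃ (|C₃| + 1) hf₃b (V₂ ω))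
    have hY : (fun ω => k f₃ (V₂ ω) *
        (P[fun ω => f₁ (V₁ ω) | MeasurableSpace.comap V₂ inferInstance]) ω) =ᵐ[P]
        P[fun ω => f₁ (V₁ ω) * f₃ (V₃ ω) | MeasurableSpace.comap V₂ inferInstance] := by
      refine ae_eq_condExp_of_forall_setIntegral_eq hm₂ hprodi
        (fun s _ _ => hYi.integrableOn) (fun s hs _ => ?_) ?_
      · obtain ⟨B, hB, rfl⟩ := hs
        have hψ : StronglyMeasurable[MeasurableSpace.comap V₂ inferInstance]
            (fun ω => B.indicator (fun _ => (1:ℝ)) (V₂ ω) * k f₃ (V₂ ω)) :=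
          (((indicator_one_measurable hB).comp (comap_measurable V₂)).mul
            ((hkmeas f₃ hf₃m).comp (comap_measurable V₂))).stronglyMeasurable
        have hψβ₁i : Integrable (fun ω => (B.indicator (fun _ => (1:ℝ)) (V₂ ω) *
            k f₃ (V₂ ω)) * f₁ (V₁ ω)) P :=
          integrable_of_bdd' (((((indicator_one_measurable hB).comp hV₂).mul
            ((hkmeas f₃ hf₃m).comp hV₂)).mul (hf₁m.comp hV₁)).aestronglyMeasurable)
            (fun ω => abs_mul_le (abs_mul_le (abs_indicator_one_le _ _)
              (hkbdd f₃ (|C₃| + 1) hf₃b _)) (hf₁b _))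
        calc ∫ ω in V₂ ⁻¹' B, k f₃ (V₂ ω) *
                (P[fun ω => f₁ (V₁ ω) | MeasurableSpace.comap V₂ inferInstance]) ω ∂P
            = ∫ ω, B.indicator (fun _ => (1:ℝ)) (V₂ ω) * (k f₃ (V₂ ω) *
                (P[fun ω => f₁ (V₁ ω) | MeasurableSpace.comap V₂ inferInstance]) ω) ∂P :=
              setIntegral_comp_indicator P V₂ hV₂ hB _
          _ = ∫ ω, (B.indicator (fun _ => (1:ℝ)) (V₂ ω) * k f₃ (V₂ ω)) *
                (P[fun ω => f₁ (V₁ ω) | MeasurableSpace.comap V₂ inferInstance]) ω ∂P :=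
              integral_congr_ae (Filter.Eventually.of_forall fun ω => by ring)
          _ = ∫ ω, (B.indicator (fun _ => (1:ℝ)) (V₂ ω) * k f₃ (V₂ ω)) * f₁ (V₁ ω) ∂P :=
              pullout_condexp P hm₂ _ _ hψ hβ₁i hψβ₁i
          _ = ∫ ω, (f₁ (V₁ ω) * B.indicator (fun _ => (1:ℝ)) (V₂ ω)) * k f₃ (V₂ ω) ∂P :=
              integral_congr_ae (Filter.Eventually.of_forall fun ω => by ring)
          _ = ∫ ω, (f₁ (V₁ ω) * B.indicator (fun _ => (1:ℝ)) (V₂ ω)) * f₃ (V₃ ω) ∂P :=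
              (hkey B hB).symm
          _ = ∫ ω, B.indicator (fun _ => (1:ℝ)) (V₂ ω) * (f₁ (V₁ ω) * f₃ (V₃ ω)) ∂P :=
              integral_congr_ae (Filter.Eventually.of_forall fun ω => by ring)
          _ = ∫ ω in V₂ ⁻¹' B, f₁ (V₁ ω) * f₃ (V₃ ω) ∂P :=
              (setIntegral_comp_indicator P V₂ hV₂ hB _).symm
      · exact ((((hkmeas f₃ hf₃m).comp (comap_measurable V₂)).stronglyMeasurable).mul
          stronglyMeasurable_condExp).aestronglyMeasurable
    have hc3 := hcond f₃ (|C₃| + 1) hf₃m hf₃b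
    filter_upwards [hY, hc3] with ω h1 h2
    rw [← h1, ← h2]
    exact mul_comm _ _
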